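/- arXiv:2103.10672 — 5 statements merged into one kernel-verified Lean document; each statement's English description precedes it below -/
import Mathlib

section
/- Let α : [a,b] → ℝ be non-decreasing, β : [a,b] → ℝ non-negative, and y : [a,b] → ℝ continuous and non-negative. If y(t) ≤ α(t) + ∫_a^t ∫_a^s β(τ) y(τ) dτ ds for all t ∈ [a,b], then y(t) ≤ α(t) · exp(∫_a^t ∫_a^s β(τ) dτ ds) for all t ∈ [a,b]. -/
open MeasureTheory Set

theorem gronwall_iterated
    (a b : ℝ) (hab : a ≤ b) (α β y : ℝ → ℝ)
    (hα : MonotoneOn α (Set.Icc a b))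
    (hβ : ∀ t ∈ Set.Icc a b, 0 ≤ β t)
    (hy : ContinuousOn y (Set.Icc a b))
    (hy0 : ∀ t ∈ Set.Icc a b, 0 ≤ y t)
    (hαint : IntegrableOn α (Set.Icc a b))
    (hβint : IntegrableOn β (Set.Icc a b))
    (h : ∀ t ∈ Set.Icc a b, y t ≤ α t + ∫ s in a..t, ∫ τ in a..s, β τ * y τ) :
    ∀ t ∈ Set.Icc a b,
      y t ≤ α t * Real.exp (∫ s in a..t, ∫ τ in a..s, β τ) := by
  intro t₀ ht₀
  obtain ⟨hat₀, ht₀b⟩ := ht₀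
  have hicc : uIcc a b = Icc a b := uIcc_of_le hab
  have hg_int : IntegrableOn (fun τ => β τ * y τ) (Icc a b) :=
    hβint.mul_continuousOn hy isCompact_Icc
  set g : ℝ → ℝ := fun τ => β τ * y τ with hgdef
  set f : ℝ → ℝ := fun s => ∫ τ in a..s, g τ with hfdef
  set B : ℝ → ℝ := fun s => ∫ τ in a..s, β τ with hBdef
  have hfc : ContinuousOn f (Icc a b) := by
    have := intervalIntegral.continuousOn_primitive_interval
      (a := a) (b := b) (μ := volume) (f := g) (by rwa [hicc])
    rwa [hicc] at this
  have hBc : ContinuousOn B (Icc a b) := by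
    have := intervalIntegral.continuousOn_primitive_interval
      (a := a) (b := b) (μ := volume) (f := β) (by rwa [hicc])
    rwa [hicc] at this
  set A : ℝ := α t₀ with hAdef
  set v : ℝ → ℝ := fun t => A + ∫ s in a..t, f s with hvdef
  set G : ℝ → ℝ := fun t => ∫ s in a..t, B s with hGdef
  have hf_int : IntegrableOn f (Icc a b) := hfc.integrableOn_compact isCompact_Icc
  have hB_int : IntegrableOn B (Icc a b) := hBc.integrableOn_compact isCompact_Icc
  have hfI : ∀ x₁ ∈ Icc a b, ∀ x₂ ∈ Icc a b, IntervalIntegrable f volume x₁ x₂ := by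
    intro x₁ h₁ x₂ h₂
    exact (hfc.mono (uIcc_subset_Icc h₁ h₂)).intervalIntegrable
  have hBI : ∀ x₁ ∈ Icc a b, ∀ x₂ ∈ Icc a b, IntervalIntegrable B volume x₁ x₂ := by
    intro x₁ h₁ x₂ h₂
    exact (hBc.mono (uIcc_subset_Icc h₁ h₂)).intervalIntegrable
  have hvc : ContinuousOn v (Icc a b) := by
    apply continuousOn_const.add
    have := intervalIntegral.continuousOn_primitive_interval
      (a := a) (b := b) (μ := volume) (f := f) (by rwa [hicc])
    rwa [hicc] at this
  have hGc : ContinuousOn G (Icc a b) := by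
    have := intervalIntegral.continuousOn_primitive_interval
      (a := a) (b := b) (μ := volume) (f := B) (by rwa [hicc])
    rwa [hicc] at this
  have hfnn : ∀ s ∈ Icc a b, 0 ≤ f s := by
    intro s hs
    apply intervalIntegral.integral_nonneg hs.1
    intro u hu
    have huab : u ∈ Icc a b := ⟨hu.1, hu.2.trans hs.2⟩
    exact mul_nonneg (hβ u huab) (hy0 u huab)
  have hvmono : MonotoneOn v (Icc a b) := by
    intro s hs t ht hst
    have h1 : IntervalIntegrable f volume a s := hfI a ⟨le_rfl, hab⟩ s hs
    have h2 : IntervalIntegrable f volume s t := hfI s hs t ht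
    have heq : (∫ u in a..t, f u) = (∫ u in a..s, f u) + ∫ u in s..t, f u :=
      (intervalIntegral.integral_add_adjacent_intervals h1 h2).symm
    have hnn : 0 ≤ ∫ u in s..t, f u :=
      intervalIntegral.integral_nonneg hst
        (fun u hu => hfnn u ⟨hs.1.trans hu.1, hu.2.trans ht.2⟩)
    simp only [hvdef, heq]
    linarith
  have hyv : ∀ τ ∈ Icc a t₀, y τ ≤ v τ := by
    intro τ hτ
    have hτab : τ ∈ Icc a b := ⟨hτ.1, hτ.2.trans ht₀b⟩
    have hατ : α τ ≤ A := hα hτab ⟨hat₀, ht₀b⟩ hτ.2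
    have := h τ hτab
    simp only [hvdef]
    calc y τ ≤ α τ + ∫ s in a..τ, f s := this
    _ ≤ A + ∫ s in a..τ, f s := by linarith
  -- key bound
  have hkey : ∀ x ∈ Icc a t₀, f x ≤ B x * v x := by
    intro x hx
    have hxab : x ∈ Icc a b := ⟨hx.1, hx.2.trans ht₀b⟩
    have hgI : IntervalIntegrable g volume a x :=
      (hg_int.mono_set (by rw [uIcc_of_le hx.1]; exact Icc_subset_Icc le_rfl hxab.2)).intervalIntegrable
    have hβI' : IntervalIntegrable β volume a x :=
      (hβint.mono_set (by rw [uIcc_of_le hx.1]; exact Icc_subset_Icc le_rfl hxab.2)).intervalIntegrable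
    have hstep : f x ≤ ∫ τ in a..x, β τ * v x := by
      apply intervalIntegral.integral_mono_on hx.1 hgI (hβI'.mul_const (v x))
      intro τ hτ
      have hτab : τ ∈ Icc a b := ⟨hτ.1, hτ.2.trans hxab.2⟩
      have h1 : y τ ≤ v τ := hyv τ ⟨hτ.1, hτ.2.trans hx.2⟩
      have h2 : v τ ≤ v x := hvmono hτab hxab hτ.2
      exact mul_le_mul_of_nonneg_left (h1.trans h2) (hβ τ hτab)
    calc f x ≤ ∫ τ in a..x, β τ * v x := hstep
    _ = B x * v x := by rw [intervalIntegral.integral_mul_const]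
  -- derivative argument: H = v * exp (-G) is antitone on Icc a t₀
  set H : ℝ → ℝ := fun t => v t * Real.exp (-G t) with hHdef
  have hHderiv : ∀ x ∈ Ioo a t₀, HasDerivAt H
      (f x * Real.exp (-G x) + v x * (Real.exp (-G x) * -(B x))) x := by
    intro x hx
    have hxab : x ∈ Ioo a b := ⟨hx.1, lt_of_lt_of_le hx.2 ht₀b⟩
    have hmem : Icc a b ∈ nhds x := Icc_mem_nhds hxab.1 hxab.2
    have hxIcc : x ∈ Icc a b := ⟨hxab.1.le, hxab.2.le⟩
    have hvd : HasDerivAt v (f x) x := by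
      have : HasDerivAt (fun t => ∫ s in a..t, f s) (f x) x :=
        intervalIntegral.integral_hasDerivAt_right (hfI a ⟨le_rfl, hab⟩ x hxIcc)
          ⟨Icc a b, hmem, (hfc.aestronglyMeasurable measurableSet_Icc)⟩
          (hfc.continuousAt hmem)
      simpa [hvdef] using this.const_add A
    have hGd : HasDerivAt G (B x) x :=
      intervalIntegral.integral_hasDerivAt_right (hBI a ⟨le_rfl, hab⟩ x hxIcc)
        ⟨Icc a b, hmem, (hBc.aestronglyMeasurable measurableSet_Icc)⟩
        (hBc.continuousAt hmem)
    exact hvd.mul (hGd.neg.exp)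
  have hanti : AntitoneOn H (Icc a t₀) := by
    apply antitoneOn_of_deriv_nonpos (convex_Icc a t₀)
    · exact (hvc.mono (Icc_subset_Icc le_rfl ht₀b)).mul
        ((Real.continuous_exp.comp_continuousOn
          (hGc.mono (Icc_subset_Icc le_rfl ht₀b)).neg))
    · intro x hx
      rw [interior_Icc] at hx
      exact ((hHderiv x hx).differentiableAt).differentiableWithinAt
    · intro x hx
      rw [interior_Icc] at hx
      rw [(hHderiv x hx).deriv]
      have hxIcc : x ∈ Icc a t₀ := ⟨hx.1.le, hx.2.le⟩
      have hk := hkey x hxIcc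
      have he : (0:ℝ) < Real.exp (-G x) := Real.exp_pos _
      nlinarith [hk, he]
  have hHa : H a = A := by
    simp [hHdef, hvdef, hGdef, intervalIntegral.integral_same]
  have hmain : H t₀ ≤ A := by
    rw [← hHa]
    exact hanti ⟨le_rfl, hat₀⟩ ⟨hat₀, le_rfl⟩ hat₀
  have hv_le : v t₀ ≤ A * Real.exp (G t₀) := by
    have := mul_le_mul_of_nonneg_right hmain (Real.exp_pos (G t₀)).le
    rwa [hHdef, mul_assoc, ← Real.exp_add, neg_add_cancel, Real.exp_zero, mul_one] at this
  have hfin : y t₀ ≤ A * Real.exp (G t₀) := (hyv t₀ ⟨hat₀, le_rfl⟩).trans hv_le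
  simpa [hAdef, hGdef, hBdef, hgdef] using hfin
end

section
/- Let ω : I → ℝ³ be C² with ω(t) ≠ 0 and ω'(t) ≠ 0 for all t, satisfying ω'(t) = S(t)ω(t) and ω''(t) = -P(t)ω(t) for continuous matrix-valued functions S (symmetric) and P. Let ξ = ω/|ω|, ζ = Sω/|Sω|, α = ⟨ξ, Sξ⟩, ρ = ⟨ξ, Pξ⟩. Then (d²/dt²) log|ω(t)| = |S(t)ξ(t)|² - 2α(t)² - ρ(t). -/
open Set
open scoped RealInnerProductSpace

theorem second_log_deriv_vorticity
    (I : Set ℝ) (hI : IsOpen I)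
    (ω : ℝ → EuclideanSpace ℝ (Fin 3))
    (S P : ℝ → Matrix (Fin 3) (Fin 3) ℝ)
    (hω : ContDiffOn ℝ 2 ω I)
    (hS : ContinuousOn S I) (hP : ContinuousOn P I)
    (hSsymm : ∀ t ∈ I, (S t).IsSymm)
    (hω0 : ∀ t ∈ I, ω t ≠ 0)
    (hω'0 : ∀ t ∈ I, deriv ω t ≠ 0)
    (hODE1 : ∀ t ∈ I, deriv ω t = Matrix.toEuclideanLin (S t) (ω t))
    (hODE2 : ∀ t ∈ I, deriv (deriv ω) t = -(Matrix.toEuclideanLin (P t) (ω t))) :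
    ∀ t ∈ I,
      deriv (deriv (fun s => Real.log ‖ω s‖)) t
        = ‖Matrix.toEuclideanLin (S t) ((‖ω t‖)⁻¹ • ω t)‖ ^ 2
          - 2 * (⟪(‖ω t‖)⁻¹ • ω t, Matrix.toEuclideanLin (S t) ((‖ω t‖)⁻¹ • ω t)⟫) ^ 2
          - ⟪(‖ω t‖)⁻¹ • ω t, Matrix.toEuclideanLin (P t) ((‖ω t‖)⁻¹ • ω t)⟫ := by
  -- basic differentiability facts
  have hωd : ∀ s ∈ I, HasDerivAt ω (deriv ω s) s := fun s hs =>
    ((hω.differentiableOn (by norm_num)).differentiableAt (hI.mem_nhds hs)).hasDerivAt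
  have hω'cd : ContDiffOn ℝ 1 (deriv ω) I := hω.deriv_of_isOpen hI (by norm_num)
  have hω'd : ∀ s ∈ I, HasDerivAt (deriv ω) (deriv (deriv ω) s) s := fun s hs =>
    ((hω'cd.differentiableOn (by norm_num)).differentiableAt (hI.mem_nhds hs)).hasDerivAt
  -- inner products
  set φ : ℝ → ℝ := fun s => ⟪ω s, ω s⟫ with hφdef
  set ψ : ℝ → ℝ := fun s => ⟪ω s, deriv ω s⟫ with hψdef
  have hφpos : ∀ s ∈ I, 0 < φ s := by
    intro s hs
    have h0 : ω s ≠ 0 := hω0 s hs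
    have h0' : ‖ω s‖ ≠ 0 := norm_ne_zero_iff.2 h0
    simp only [hφdef, real_inner_self_eq_norm_sq]
    positivity
  have hφd : ∀ s ∈ I, HasDerivAt φ (2 * ψ s) s := by
    intro s hs
    have := (hωd s hs).inner ℝ (hωd s hs)
    convert this using 1
    iterate 2 rfl
    simp [hψdef, real_inner_comm (ω s) (deriv ω s)]
    ring
  -- first derivative of log ‖ω‖ on I
  have hlog : ∀ s ∈ I, HasDerivAt (fun u => Real.log ‖ω u‖) (ψ s / φ s) s := by
    intro s hs
    have hF : HasDerivAt (fun u => Real.log (φ u) / 2) ((2 * ψ s / φ s) / 2) s :=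
      ((hφd s hs).log (hφpos s hs).ne').div_const 2
    have heq : (fun u => Real.log ‖ω u‖) =ᶠ[nhds s] (fun u => Real.log (φ u) / 2) := by
      filter_upwards [hI.mem_nhds hs] with u hu
      show Real.log ‖ω u‖ = Real.log ⟪ω u, ω u⟫ / 2
      rw [real_inner_self_eq_norm_sq (ω u), Real.log_pow]
      ring
    have := hF.congr_of_eventuallyEq heq
    convert this using 1
    iterate 2 rfl
    ring
  -- hence deriv agrees with ψ/φ on I
  have hd1 : ∀ s ∈ I, deriv (fun u => Real.log ‖ω u‖) s = ψ s / φ s := fun s hs =>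
    (hlog s hs).deriv
  intro t ht
  have hEE : deriv (fun u => Real.log ‖ω u‖) =ᶠ[nhds t] (fun s => ψ s / φ s) := by
    filter_upwards [hI.mem_nhds ht] with u hu using hd1 u hu
  rw [hEE.deriv_eq]
  -- derivatives of ψ and φ at t
  have hψd : HasDerivAt ψ (⟪ω t, deriv (deriv ω) t⟫ + ⟪deriv ω t, deriv ω t⟫) t :=
    (hωd t ht).inner ℝ (hω'd t ht)
  have hq : HasDerivAt (fun s => ψ s / φ s)
      (((⟪ω t, deriv (deriv ω) t⟫ + ⟪deriv ω t, deriv ω t⟫) * φ t - ψ t * (2 * ψ t)) / φ t ^ 2) t :=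
    hψd.div (hφd t ht) (hφpos t ht).ne'
  rw [hq.deriv]
  -- now algebra
  have hc : ‖ω t‖ ≠ 0 := norm_ne_zero_iff.2 (hω0 t ht)
  have hlin1 : Matrix.toEuclideanLin (S t) ((‖ω t‖)⁻¹ • ω t) = (‖ω t‖)⁻¹ • deriv ω t := by
    rw [map_smul, hODE1 t ht]
  have hlin2 : ⟪(‖ω t‖)⁻¹ • ω t, Matrix.toEuclideanLin (P t) ((‖ω t‖)⁻¹ • ω t)⟫
      = - ((‖ω t‖)⁻¹ * (‖ω t‖)⁻¹) * ⟪ω t, deriv (deriv ω) t⟫ := by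
    rw [map_smul, real_inner_smul_left, real_inner_smul_right, hODE2 t ht]
    simp [inner_neg_right]
    ring
  rw [hlin1, hlin2]
  rw [norm_smul, real_inner_smul_left, real_inner_smul_right]
  have hφt : φ t = ‖ω t‖ * ‖ω t‖ := real_inner_self_eq_norm_mul_norm (ω t)
  have hψt : ψ t = ⟪ω t, deriv ω t⟫ := rfl
  have hnn : ⟪deriv ω t, deriv ω t⟫ = ‖deriv ω t‖ ^ 2 := real_inner_self_eq_norm_sq _
  rw [hψt, hnn, hφt]
  have h1 : ‖(‖ω t‖)⁻¹‖ = (‖ω t‖)⁻¹ := by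
    rw [Real.norm_eq_abs, abs_inv, abs_norm]
  rw [h1]
  field_simp
  ring
end

section
/- Let ω : I → ℝ³ be C² with ω(t) ≠ 0, ω'(t) ≠ 0 for all t, and ω''(t) = -P(t)ω(t). Let ξ = ω/|ω| and ζ = ω'/|ω'|. Then ((d/dt)|ω'|)² + (|ζ'| · (d/dt)|ω|)² + (|ζ'| · |ξ'| · |ω|)² = |Pω|², and consequently (d/dt)|ω'| + |ζ'| · (d/dt)|ω| + |ζ'| · |ξ'| · |ω| ≤ √3 |Pω|. -/
open Set

section aux

variable {F : Type*} [NormedAddCommGroup F] [InnerProductSpace ℝ F]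

local notation "⟪" x ", " y "⟫" => @inner ℝ _ _ x y

lemma core_pythagoras (v : ℝ → F) (t : ℝ) (hv : DifferentiableAt ℝ v t) (h0 : v t ≠ 0) :
    (deriv (fun s => ‖v s‖) t) ^ 2
      + (‖deriv (fun s => (‖v s‖)⁻¹ • v s) t‖ * ‖v t‖) ^ 2
      = ‖deriv v t‖ ^ 2 := by
  set u : ℝ → F := fun s => (‖v s‖)⁻¹ • v s with hu_def
  have hnt : ‖v t‖ ≠ 0 := norm_ne_zero_iff.mpr h0
  have hn : DifferentiableAt ℝ (fun s => ‖v s‖) t := hv.norm ℝ h0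
  have hinv : DifferentiableAt ℝ (fun s => (‖v s‖)⁻¹) t := hn.inv hnt
  have hu : DifferentiableAt ℝ u t := hinv.smul hv
  have hunorm : ‖u t‖ = 1 := by
    show ‖(‖v t‖)⁻¹ • v t‖ = 1
    rw [norm_smul, norm_inv, norm_norm, inv_mul_cancel₀ hnt]
  have hev : ∀ᶠ s in nhds t, v s ≠ 0 := hv.continuousAt.eventually_ne h0
  have horth : ⟪u t, deriv u t⟫ = 0 := by
    have h1 : (fun s => ⟪u s, u s⟫) =ᶠ[nhds t] fun _ => (1 : ℝ) := by
      filter_upwards [hev] with s hs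
      have hns : ‖u s‖ = 1 := by
        simp only [hu_def, norm_smul, norm_inv, norm_norm]
        exact inv_mul_cancel₀ (norm_ne_zero_iff.mpr hs)
      rw [real_inner_self_eq_norm_sq, hns]; norm_num
    have h2 : HasDerivAt (fun s => ⟪u s, u s⟫) (⟪u t, deriv u t⟫ + ⟪deriv u t, u t⟫) t :=
      HasDerivAt.inner ℝ hu.hasDerivAt hu.hasDerivAt
    have h3 : deriv (fun s => ⟪u s, u s⟫) t = 0 := by
      rw [Filter.EventuallyEq.deriv_eq h1]; simp
    have h4 := h2.deriv
    rw [h3] at h4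
    have hc := real_inner_comm (u t) (deriv u t)
    linarith
  have hprod : v = fun s => ‖v s‖ • u s := by
    funext s
    by_cases hs : v s = 0
    · simp [hu_def, hs]
    · simp [hu_def, smul_smul, mul_inv_cancel₀ (norm_ne_zero_iff.mpr hs)]
  have hder : deriv v t = ‖v t‖ • deriv u t + deriv (fun s => ‖v s‖) t • u t := by
    have h4 : HasDerivAt (fun s => ‖v s‖ • u s)
        (‖v t‖ • deriv u t + deriv (fun s => ‖v s‖) t • u t) t :=
      HasDerivAt.smul hn.hasDerivAt hu.hasDerivAt
    conv_lhs => rw [hprod]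
    exact h4.deriv
  rw [hder, norm_add_sq_real, inner_smul_left, inner_smul_right, real_inner_comm, horth,
    norm_smul, norm_smul, hunorm]
  simp only [Real.norm_eq_abs, norm_norm, map_mul, mul_zero, mul_one]
  rw [mul_pow, mul_pow, sq_abs, sq_abs]
  ring

end aux

theorem three_term_pythagoras_and_inequality
    (I : Set ℝ) (hI : IsOpen I)
    (ω : ℝ → EuclideanSpace ℝ (Fin 3))
    (P : ℝ → Matrix (Fin 3) (Fin 3) ℝ)
    (hω : ContDiffOn ℝ 2 ω I)
    (hP : ContinuousOn P I)
    (hω0 : ∀ t ∈ I, ω t ≠ 0)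
    (hω'0 : ∀ t ∈ I, deriv ω t ≠ 0)
    (hODE : ∀ t ∈ I, deriv (deriv ω) t = -(Matrix.toEuclideanLin (P t) (ω t))) :
    ∀ t ∈ I,
      ((deriv (fun s => ‖deriv ω s‖) t) ^ 2
        + (‖deriv (fun s => (‖deriv ω s‖)⁻¹ • deriv ω s) t‖
            * deriv (fun s => ‖ω s‖) t) ^ 2
        + (‖deriv (fun s => (‖deriv ω s‖)⁻¹ • deriv ω s) t‖
            * ‖deriv (fun s => (‖ω s‖)⁻¹ • ω s) t‖ * ‖ω t‖) ^ 2
        = ‖Matrix.toEuclideanLin (P t) (ω t)‖ ^ 2) ∧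
      (deriv (fun s => ‖deriv ω s‖) t
        + ‖deriv (fun s => (‖deriv ω s‖)⁻¹ • deriv ω s) t‖
            * deriv (fun s => ‖ω s‖) t
        + ‖deriv (fun s => (‖deriv ω s‖)⁻¹ • deriv ω s) t‖
            * ‖deriv (fun s => (‖ω s‖)⁻¹ • ω s) t‖ * ‖ω t‖
        ≤ Real.sqrt 3 * ‖Matrix.toEuclideanLin (P t) (ω t)‖) := by
  intro t ht
  have hd1 : DifferentiableAt ℝ ω t :=
    (hω.contDiffAt (hI.mem_nhds ht)).differentiableAt (by norm_num)
  have hd2 : DifferentiableAt ℝ (deriv ω) t :=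
    ((hω.deriv_of_isOpen (m := 1) hI (by norm_num)).contDiffAt
      (hI.mem_nhds ht)).differentiableAt one_ne_zero
  have eq1 := core_pythagoras ω t hd1 (hω0 t ht)
  have eq2 := core_pythagoras (deriv ω) t hd2 (hω'0 t ht)
  have hN : ‖deriv (deriv ω) t‖ = ‖Matrix.toEuclideanLin (P t) (ω t)‖ := by
    rw [hODE t ht, norm_neg]
  rw [hN] at eq2
  set a := deriv (fun s => ‖deriv ω s‖) t
  set Z := ‖deriv (fun s => (‖deriv ω s‖)⁻¹ • deriv ω s) t‖
  set X := ‖deriv (fun s => (‖ω s‖)⁻¹ • ω s) t‖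
  set r' := deriv (fun s => ‖ω s‖) t
  set r := ‖ω t‖
  set N := ‖Matrix.toEuclideanLin (P t) (ω t)‖
  have key : a ^ 2 + (Z * r') ^ 2 + (Z * X * r) ^ 2 = N ^ 2 := by
    have : a ^ 2 + (Z * r') ^ 2 + (Z * X * r) ^ 2
        = a ^ 2 + Z ^ 2 * (r' ^ 2 + (X * r) ^ 2) := by ring
    rw [this, eq1]
    calc a ^ 2 + Z ^ 2 * ‖deriv ω t‖ ^ 2
        = a ^ 2 + (Z * ‖deriv ω t‖) ^ 2 := by ring
      _ = N ^ 2 := eq2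
  refine ⟨key, ?_⟩
  have hNnn : (0 : ℝ) ≤ N := norm_nonneg _
  have h1 : (a + Z * r' + Z * X * r) ^ 2 ≤ 3 * N ^ 2 := by nlinarith [sq_nonneg (a - Z * r'), sq_nonneg (a - Z * X * r), sq_nonneg (Z * r' - Z * X * r)]
  calc a + Z * r' + Z * X * r ≤ |a + Z * r' + Z * X * r| := le_abs_self _
    _ = Real.sqrt ((a + Z * r' + Z * X * r) ^ 2) := (Real.sqrt_sq_eq_abs _).symm
    _ ≤ Real.sqrt (3 * N ^ 2) := Real.sqrt_le_sqrt h1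
    _ = Real.sqrt 3 * N := by
        rw [Real.sqrt_mul (by norm_num), Real.sqrt_sq hNnn]
end

section
/- Let ω : I → ℝ³ be C² with ω ≠ 0, ω' ≠ 0, ζ' ≠ 0, satisfying ω''(t) = -P(t)ω(t), with ξ = ω/|ω|, ζ = ω'/|ω'|. Then ⟨ζ'/|ζ'|, P ξ⟩ = -(|ω'|/|ω|) |ζ'|. -/
open Set
open scoped RealInnerProductSpace

theorem component_P_xi_along_zeta_prime
    (I : Set ℝ) (hI : IsOpen I)
    (ω : ℝ → EuclideanSpace ℝ (Fin 3))
    (P : ℝ → Matrix (Fin 3) (Fin 3) ℝ)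
    (hω : ContDiffOn ℝ 2 ω I)
    (hP : ContinuousOn P I)
    (hω0 : ∀ t ∈ I, ω t ≠ 0)
    (hω'0 : ∀ t ∈ I, deriv ω t ≠ 0)
    (hζ'0 : ∀ t ∈ I, deriv (fun s => (‖deriv ω s‖)⁻¹ • deriv ω s) t ≠ 0)
    (hODE : ∀ t ∈ I, deriv (deriv ω) t = -(Matrix.toEuclideanLin (P t) (ω t))) :
    ∀ t ∈ I,
      ⟪(‖deriv (fun s => (‖deriv ω s‖)⁻¹ • deriv ω s) t‖)⁻¹
          • deriv (fun s => (‖deriv ω s‖)⁻¹ • deriv ω s) t,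
        Matrix.toEuclideanLin (P t) ((‖ω t‖)⁻¹ • ω t)⟫
      = -(‖deriv ω t‖ / ‖ω t‖)
          * ‖deriv (fun s => (‖deriv ω s‖)⁻¹ • deriv ω s) t‖ := by
  intro t ht
  have htI : I ∈ nhds t := hI.mem_nhds ht
  set f := deriv ω with hfdef
  set ζ : ℝ → EuclideanSpace ℝ (Fin 3) := fun s => (‖f s‖)⁻¹ • f s with hζdef
  have hf1 : ContDiffOn ℝ 1 f I := hω.deriv_of_isOpen hI (by norm_num)
  have hfd : ∀ s ∈ I, DifferentiableAt ℝ f s := fun s hs =>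
    (hf1.contDiffAt (hI.mem_nhds hs)).differentiableAt one_ne_zero
  have hft0 : f t ≠ 0 := hω'0 t ht
  have hrt0 : ‖f t‖ ≠ 0 := norm_ne_zero_iff.2 hft0
  -- derivative of the norm of f
  have hrd : DifferentiableAt ℝ (fun s => ‖f s‖) t := (hfd t ht).norm ℝ hft0
  -- ζ differentiable at t
  have hζd : DifferentiableAt ℝ ζ t := (hrd.inv hrt0).smul (hfd t ht)
  set ζ' := deriv ζ t with hζ'def
  have hζ'ne : ζ' ≠ 0 := hζ'0 t ht
  have hζ'norm : ‖ζ'‖ ≠ 0 := norm_ne_zero_iff.2 hζ'ne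
  have hζHas : HasDerivAt ζ ζ' t := hζd.hasDerivAt
  -- (A) ⟪ζ', ζ t⟫ = 0
  have hunit : ∀ᶠ s in nhds t, ⟪ζ s, ζ s⟫ = (1:ℝ) := by
    filter_upwards [htI] with s hs
    have h0 : f s ≠ 0 := hω'0 s hs
    have : ‖ζ s‖ = 1 := by
      simp [hζdef, norm_smul, abs_of_nonneg (inv_nonneg.2 (norm_nonneg _)),
        inv_mul_cancel₀ (norm_ne_zero_iff.2 h0)]
    rw [real_inner_self_eq_norm_sq, this]; norm_num
  have hA : ⟪ζ', ζ t⟫ = 0 := by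
    have h1 : HasDerivAt (fun s => ⟪ζ s, ζ s⟫) (⟪ζ t, ζ'⟫ + ⟪ζ', ζ t⟫) t :=
      HasDerivAt.inner ℝ hζHas hζHas
    have h2 : HasDerivAt (fun s => ⟪ζ s, ζ s⟫) 0 t :=
      (hasDerivAt_const t (1:ℝ)).congr_of_eventuallyEq hunit
    have h3 := h1.unique h2
    rw [real_inner_comm (ζ t) ζ'] at h3
    rw [real_inner_comm]
    linarith
  -- (B) deriv f t = (deriv (fun s => ‖f s‖) t) • ζ t + ‖f t‖ • ζ'
  have hEq : (fun s => ‖f s‖ • ζ s) =ᶠ[nhds t] f := by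
    filter_upwards [htI] with s hs
    simp [hζdef, smul_inv_smul₀ (norm_ne_zero_iff.2 (hω'0 s hs))]
  have hBsmul : HasDerivAt (fun s => ‖f s‖ • ζ s)
      (‖f t‖ • ζ' + (deriv (fun s => ‖f s‖) t) • ζ t) t :=
    (hrd.hasDerivAt).smul hζHas
  have hB : deriv f t = ‖f t‖ • ζ' + (deriv (fun s => ‖f s‖) t) • ζ t :=
    (hBsmul.congr_of_eventuallyEq hEq.symm).deriv
  -- inner of ζ' with deriv f t
  have hinner : ⟪ζ', deriv f t⟫ = ‖f t‖ * ‖ζ'‖ ^ 2 := by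
    rw [hB, inner_add_right, real_inner_smul_right, real_inner_smul_right, hA,
      real_inner_self_eq_norm_sq]
    ring
  -- rewrite P term using the ODE
  have hPω : Matrix.toEuclideanLin (P t) (ω t) = -(deriv f t) := by
    have := hODE t ht
    rw [hfdef] at this ⊢
    rw [this]; simp
  have hgoal : Matrix.toEuclideanLin (P t) ((‖ω t‖)⁻¹ • ω t)
      = (‖ω t‖)⁻¹ • (-(deriv f t)) := by
    rw [map_smul, hPω]
  rw [hgoal, real_inner_smul_left, real_inner_smul_right, inner_neg_right, hinner]
  have hωt0 : ‖ω t‖ ≠ 0 := norm_ne_zero_iff.2 (hω0 t ht)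
  field_simp
end

section
/- Let y : [0,T] → ℝ be C¹ and nonnegative, and suppose y(t) ≤ A + Bt + ∫_0^t ∫_0^s β(τ) y(τ) dτ ds for all t ∈ [0,T], where A, B ≥ 0 and β ≥ 0 is continuous. Then y(t) ≤ (A + Bt) exp(∫_0^t ∫_0^s β(τ) dτ ds) for all t ∈ [0,T]. -/
open Set intervalIntegral

theorem iterated_gronwall_affine
    (T A B : ℝ) (hT : 0 < T) (hA : 0 ≤ A) (hB : 0 ≤ B)
    (y β : ℝ → ℝ)
    (hy : ContDiffOn ℝ 1 y (Set.Icc 0 T))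
    (hy0 : ∀ t ∈ Set.Icc 0 T, 0 ≤ y t)
    (hβ : ContinuousOn β (Set.Icc 0 T))
    (hβ0 : ∀ t ∈ Set.Icc 0 T, 0 ≤ β t)
    (h : ∀ t ∈ Set.Icc 0 T,
      y t ≤ A + B * t + ∫ s in (0:ℝ)..t, ∫ τ in (0:ℝ)..s, β τ * y τ) :
    ∀ t ∈ Set.Icc 0 T,
      y t ≤ (A + B * t) * Real.exp (∫ s in (0:ℝ)..t, ∫ τ in (0:ℝ)..s, β τ) := by
  have hTle : (0:ℝ) ≤ T := hT.le
  have huIcc : uIcc (0:ℝ) T = Icc 0 T := uIcc_of_le hTle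
  have hyc : ContinuousOn y (Icc 0 T) := hy.continuousOn
  set f : ℝ → ℝ := fun τ => β τ * y τ with hf_def
  have hfc : ContinuousOn f (Icc 0 T) := hβ.mul hyc
  -- integrability of continuous functions on subintervals
  have hsub : ∀ t ∈ Icc (0:ℝ) T, uIcc (0:ℝ) t ⊆ Icc 0 T := by
    intro t ht
    rw [uIcc_of_le ht.1]
    exact Icc_subset_Icc le_rfl ht.2
  have hf_int : ∀ t ∈ Icc (0:ℝ) T, IntervalIntegrable f MeasureTheory.volume 0 t := by
    intro t ht
    exact (hfc.mono (hsub t ht)).intervalIntegrable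
  have hβ_int : ∀ t ∈ Icc (0:ℝ) T, IntervalIntegrable β MeasureTheory.volume 0 t := by
    intro t ht
    exact (hβ.mono (hsub t ht)).intervalIntegrable
  set g : ℝ → ℝ := fun s => ∫ τ in (0:ℝ)..s, f τ with hg_def
  set G : ℝ → ℝ := fun s => ∫ τ in (0:ℝ)..s, β τ with hG_def
  have hgc : ContinuousOn g (Icc 0 T) := by
    have := intervalIntegral.continuousOn_primitive_interval
      (f := f) (μ := MeasureTheory.volume) (a := 0) (b := T)
      ((hfc.mono (by rw [huIcc])).integrableOn_compact (by rw [huIcc]; exact isCompact_Icc))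
    rwa [huIcc] at this
  have hGc : ContinuousOn G (Icc 0 T) := by
    have := intervalIntegral.continuousOn_primitive_interval
      (f := β) (μ := MeasureTheory.volume) (a := 0) (b := T)
      ((hβ.mono (by rw [huIcc])).integrableOn_compact (by rw [huIcc]; exact isCompact_Icc))
    rwa [huIcc] at this
  have hg_int : ∀ t ∈ Icc (0:ℝ) T, IntervalIntegrable g MeasureTheory.volume 0 t := by
    intro t ht
    exact (hgc.mono (hsub t ht)).intervalIntegrable
  have hG_int : ∀ t ∈ Icc (0:ℝ) T, IntervalIntegrable G MeasureTheory.volume 0 t := by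
    intro t ht
    exact (hGc.mono (hsub t ht)).intervalIntegrable
  set z : ℝ → ℝ := fun t => A + B * t + ∫ s in (0:ℝ)..t, g s with hz_def
  set E : ℝ → ℝ := fun t => ∫ s in (0:ℝ)..t, G s with hE_def
  have hint : interior (Icc (0:ℝ) T) = Ioo 0 T := interior_Icc
  have hIoo_sub : Ioo (0:ℝ) T ⊆ Icc 0 T := Ioo_subset_Icc_self
  -- nonnegativity facts
  have hg0 : ∀ t ∈ Icc (0:ℝ) T, 0 ≤ g t := by
    intro t ht
    refine intervalIntegral.integral_nonneg ht.1 ?_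
    intro τ hτ
    have hτ' : τ ∈ Icc (0:ℝ) T := ⟨hτ.1, hτ.2.trans ht.2⟩
    exact mul_nonneg (hβ0 τ hτ') (hy0 τ hτ')
  have hG0 : ∀ t ∈ Icc (0:ℝ) T, 0 ≤ G t := by
    intro t ht
    refine intervalIntegral.integral_nonneg ht.1 ?_
    intro τ hτ
    exact hβ0 τ ⟨hτ.1, hτ.2.trans ht.2⟩
  have hE0 : ∀ t ∈ Icc (0:ℝ) T, 0 ≤ E t := by
    intro t ht
    refine intervalIntegral.integral_nonneg ht.1 ?_
    intro s hs
    exact hG0 s ⟨hs.1, hs.2.trans ht.2⟩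
  -- derivatives at interior points
  have hg_deriv : ∀ x ∈ Ioo (0:ℝ) T, HasDerivAt (fun u => ∫ s in (0:ℝ)..u, g s) (g x) x := by
    intro x hx
    refine intervalIntegral.integral_hasDerivAt_right (hg_int x (hIoo_sub hx)) ?_ ?_
    · exact ContinuousAt.stronglyMeasurableAtFilter isOpen_Ioo
        (fun t ht => (hgc t (hIoo_sub ht)).continuousAt (Icc_mem_nhds ht.1 ht.2)) x hx
    · exact (hgc x (hIoo_sub hx)).continuousAt (Icc_mem_nhds hx.1 hx.2)
  have hE_deriv : ∀ x ∈ Ioo (0:ℝ) T, HasDerivAt E (G x) x := by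
    intro x hx
    refine intervalIntegral.integral_hasDerivAt_right (hG_int x (hIoo_sub hx)) ?_ ?_
    · exact ContinuousAt.stronglyMeasurableAtFilter isOpen_Ioo
        (fun t ht => (hGc t (hIoo_sub ht)).continuousAt (Icc_mem_nhds ht.1 ht.2)) x hx
    · exact (hGc x (hIoo_sub hx)).continuousAt (Icc_mem_nhds hx.1 hx.2)
  have hz_deriv : ∀ x ∈ Ioo (0:ℝ) T, HasDerivAt z (B + g x) x := by
    intro x hx
    have h1 : HasDerivAt (fun t : ℝ => A + B * t) B x := by
      simpa using ((hasDerivAt_id x).const_mul B).const_add A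
    exact h1.add (hg_deriv x hx)
  have hzc : ContinuousOn z (Icc 0 T) := by
    refine (continuousOn_const.add (continuousOn_const.mul continuousOn_id)).add ?_
    have := intervalIntegral.continuousOn_primitive_interval
      (f := g) (μ := MeasureTheory.volume) (a := 0) (b := T)
      ((hgc.mono (by rw [huIcc])).integrableOn_compact (by rw [huIcc]; exact isCompact_Icc))
    rwa [huIcc] at this
  have hEc : ContinuousOn E (Icc 0 T) := by
    have := intervalIntegral.continuousOn_primitive_interval
      (f := G) (μ := MeasureTheory.volume) (a := 0) (b := T)
      ((hGc.mono (by rw [huIcc])).integrableOn_compact (by rw [huIcc]; exact isCompact_Icc))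
    rwa [huIcc] at this
  -- z is monotone on [0,T]
  have hz_mono : MonotoneOn z (Icc 0 T) := by
    refine monotoneOn_of_hasDerivWithinAt_nonneg (convex_Icc 0 T) hzc
      (f' := fun x => B + g x) ?_ ?_
    · intro x hx
      rw [hint] at hx ⊢
      exact (hz_deriv x hx).hasDerivWithinAt
    · intro x hx
      rw [hint] at hx
      exact add_nonneg hB (hg0 x (hIoo_sub hx))
  -- y ≤ z on [0,T]
  have hyz : ∀ t ∈ Icc (0:ℝ) T, y t ≤ z t := h
  -- key inequality: g t ≤ z t * G t
  have hkey : ∀ t ∈ Icc (0:ℝ) T, g t ≤ z t * G t := by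
    intro t ht
    have h1 : g t ≤ ∫ τ in (0:ℝ)..t, β τ * z t := by
      refine intervalIntegral.integral_mono_on ht.1 (hf_int t ht) ?_ ?_
      · exact (((hβ.mono (hsub t ht)).mul continuousOn_const)).intervalIntegrable
      · intro τ hτ
        have hτ' : τ ∈ Icc (0:ℝ) T := ⟨hτ.1, hτ.2.trans ht.2⟩
        have : y τ ≤ z t := (hyz τ hτ').trans (hz_mono hτ' ht hτ.2)
        exact mul_le_mul_of_nonneg_left this (hβ0 τ hτ')
    calc g t ≤ ∫ τ in (0:ℝ)..t, β τ * z t := h1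
      _ = (∫ τ in (0:ℝ)..t, β τ) * z t := by
          rw [← intervalIntegral.integral_mul_const]
      _ = z t * G t := mul_comm _ _
  -- the comparison function
  set φ : ℝ → ℝ := fun t => z t * Real.exp (-E t) - B * t with hφ_def
  have hφ_anti : AntitoneOn φ (Icc 0 T) := by
    refine antitoneOn_of_hasDerivWithinAt_nonpos (convex_Icc 0 T)
      (f' := fun x => (B + g x) * Real.exp (-E x) + z x * (Real.exp (-E x) * (-G x)) - B)
      ?_ ?_ ?_
    · exact (hzc.mul ((hEc.neg).rexp)).sub (continuousOn_const.mul continuousOn_id)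
    · intro x hx
      rw [hint] at hx ⊢
      have hE' : HasDerivAt (fun t => Real.exp (-E t)) (Real.exp (-E x) * (-G x)) x := by
        have : HasDerivAt (fun t => -E t) (-G x) x := (hE_deriv x hx).neg
        exact (Real.hasDerivAt_exp (-E x)).comp x this
      have hB' : HasDerivAt (fun t : ℝ => B * t) B x := by
        simpa using (hasDerivAt_id x).const_mul B
      exact (((hz_deriv x hx).mul hE').sub hB').hasDerivWithinAt
    · intro x hx
      rw [hint] at hx
      have hx' : x ∈ Icc (0:ℝ) T := hIoo_sub hx
      have hexp : Real.exp (-E x) ≤ 1 := by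
        rw [Real.exp_le_one_iff]
        simpa using hE0 x hx'
      have hexp0 : (0:ℝ) < Real.exp (-E x) := Real.exp_pos _
      have h1 : (B + g x) * Real.exp (-E x) + z x * (Real.exp (-E x) * (-G x))
          = (B + g x - z x * G x) * Real.exp (-E x) := by ring
      beta_reduce
      rw [h1]
      have h2 : B + g x - z x * G x ≤ B := by
        have := hkey x hx'
        linarith
      have h3 : (B + g x - z x * G x) * Real.exp (-E x) ≤ B * Real.exp (-E x) :=
        mul_le_mul_of_nonneg_right h2 hexp0.le
      have h4 : B * Real.exp (-E x) ≤ B * 1 :=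
        mul_le_mul_of_nonneg_left hexp hB
      linarith
  -- conclude
  intro t ht
  have h0T : (0:ℝ) ∈ Icc (0:ℝ) T := ⟨le_rfl, hTle⟩
  have hφ0 : φ 0 = A := by
    simp [hφ_def, hz_def, hE_def]
  have hφt : φ t ≤ A := hφ0 ▸ hφ_anti h0T ht ht.1
  have hEt : Real.exp (-E t) = (Real.exp (E t))⁻¹ := by
    rw [Real.exp_neg]
  have hzt : z t ≤ (A + B * t) * Real.exp (E t) := by
    have hpos : (0:ℝ) < Real.exp (-E t) := Real.exp_pos _
    have : z t * Real.exp (-E t) ≤ A + B * t := by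
      have := hφt; simp only [hφ_def] at this; linarith
    calc z t = (z t * Real.exp (-E t)) * Real.exp (E t) := by
          rw [mul_assoc, ← Real.exp_add]; simp
      _ ≤ (A + B * t) * Real.exp (E t) :=
          mul_le_mul_of_nonneg_right this (Real.exp_pos _).le
  exact (hyz t ht).trans hzt
end
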